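/- For any linear order on {E,D,N} with E < N, the sum of q^{maj(W)} over all Schröder paths from (0,0) to (n,n) with l steps (Delannoy paths never going above y=x) equals (1/[l-n+1]_q) · qbinom(2(l-n), l-n) · qbinom(l, 2n-l), where qbinom denotes the Gaussian binomial coefficient and [m]_q = 1+q+...+q^{m-1}. -/

import Mathlib

inductive Step : Type
  | E | D | N
deriving DecidableEq

instance : Fintype Step :=
  ⟨{Step.E, Step.D, Step.N}, by intro x; cases x <;> simp⟩

open Step Polynomial

/-- All words of length `l` over the step alphabet. -/
def Words (l : ℕ) : Finset (List Step) :=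
  (Finset.univ : Finset (Fin l → Step)).image List.ofFn

/-- Delannoy paths from (0,0) to (m,n) with `l` steps, encoded as words:
`#E + #D = m`, `#N + #D = n`, length `l`. -/
def DelSet (m n l : ℕ) : Finset (List Step) :=
  (Words l).filter fun w => w.count E + w.count D = m ∧ w.count N + w.count D = n

/-- A word is bad if some prefix contains more N's than E's. -/
def bad (w : List Step) : Bool :=
  (List.range (w.length + 1)).any fun k => (w.take k).count E < (w.take k).count N

/-- Bad Delannoy paths from (0,0) to (n,n) with `l` steps. -/
def BDelSet (n l : ℕ) : Finset (List Step) :=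
  (DelSet n n l).filter fun w => bad w

/-- Schröder paths: Delannoy paths to (n,n) never going above the diagonal. -/
def SchSet (n l : ℕ) : Finset (List Step) :=
  (DelSet n n l).filter fun w => ¬ bad w

/-- Major index of a word w_1 ⋯ w_l with respect to a ranking of the letters:
the sum of all positions i (1 ≤ i ≤ l-1) with w_i > w_{i+1}. -/
def maj (rank : Step → ℕ) (w : List Step) : ℕ :=
  ∑ i ∈ Finset.range (w.length - 1),
    if rank (w.getD (i + 1) E) < rank (w.getD i E) then i + 1 else 0

/-- q-integer [m] = 1 + q + ⋯ + q^{m-1}. -/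
noncomputable def qint (m : ℕ) : Polynomial ℚ :=
  ∑ i ∈ Finset.range m, X ^ i

/-- q-factorial. -/
noncomputable def qfact : ℕ → Polynomial ℚ
  | 0 => 1
  | m + 1 => qfact m * qint (m + 1)

/-- Gaussian binomial coefficient, via the q-Pascal recurrence. -/
noncomputable def qbinom : ℕ → ℕ → Polynomial ℚ
  | _, 0 => 1
  | 0, _ + 1 => 0
  | m + 1, k + 1 => qbinom m k + X ^ (k + 1) * qbinom m (k + 1)

/-- q-trinomial coefficient [l]!/([a]![b]![c]!), defined when a+b+c = l. -/
noncomputable def qbinom3 (l a b c : ℕ) : Polynomial ℚ :=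
  if a + b + c = l then qbinom l a * qbinom (l - a) b else 0

/-- Depth after the first `i` steps: #N − #E. -/
def depth (w : List Step) (i : ℕ) : ℤ :=
  ((w.take i).count N : ℤ) - (w.take i).count E

/-- `k` (0 ≤ k ≤ l) achieves the maximal running depth. -/
def isMaxDepth (w : List Step) (k : ℕ) : Bool :=
  (List.range (w.length + 1)).all fun i => decide (depth w i ≤ depth w k)

/-- The first index (number of steps) at which the running depth is maximal. -/
def firstDeep (w : List Step) : ℕ :=
  (List.range (w.length + 1)).findIdx (isMaxDepth w)

/-- The last index at which the running depth is maximal. -/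
def lastDeep (w : List Step) : ℕ :=
  w.length - (List.range (w.length + 1)).reverse.findIdx (isMaxDepth w)

/-- Replace the first deepest step (the step w_k, k = firstDeep) with E. -/
def phi (w : List Step) : List Step := w.set (firstDeep w - 1) E

/-- Replace the step following the last deepest point with N. -/
def phiInv (w : List Step) : List Step := w.set (lastDeep w) N

/-- Number of consecutive D's immediately after the first deepest step. -/
def runS (w : List Step) : ℕ := ((w.drop (firstDeep w)).takeWhile (· == D)).length

/-- Number of consecutive D's immediately before the first deepest step. -/
def runR (w : List Step) : ℕ :=
  ((w.take (firstDeep w - 1)).reverse.takeWhile (· == D)).length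

/-- The window map: replace W₁ = D^r w_k D^s by D^{r-1} E D^{s+1} if r ≥ 1,
and by D^s E if r = 0. -/
def phiWin (w : List Step) : List Step :=
  let k := firstDeep w - 1
  let r := runR w
  let s := runS w
  let seg : List Step :=
    if 1 ≤ r then List.replicate (r - 1) D ++ [E] ++ List.replicate (s + 1) D
    else List.replicate s D ++ [E]
  w.take (k - r) ++ seg ++ w.drop (k + s + 1)

/-- 0-based index of the first step after which the path is above the diagonal. -/
def firstAbove (w : List Step) : ℕ :=
  (List.range w.length).findIdx fun i =>
    decide ((w.take (i + 1)).count E < (w.take (i + 1)).count N)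

/-- The map ψ of Bonin–Shapiro–Simion: replace with E the last N of the maximal
run of consecutive N's beginning at the first step going above the diagonal. -/
def psi (w : List Step) : List Step :=
  let i := firstAbove w
  let j := i + ((w.drop i).takeWhile (· == N)).length - 1
  w.set j E


lemma qb_zero (m : ℕ) : qbinom m 0 = 1 := by cases m <;> rfl

lemma pascal1 (m k : ℕ) : qbinom (m + 1) (k + 1) = qbinom m k + X ^ (k + 1) * qbinom m (k + 1) :=
  rfl

lemma qb_of_lt : ∀ m k : ℕ, m < k → qbinom m k = 0 := by
  intro m
  induction m with
  | zero => intro k hk; match k, hk with | k + 1, _ => rfl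
  | succ m ih =>
    intro k hk
    match k, hk with
    | k + 1, hk =>
      rw [pascal1, ih k (by omega), ih (k + 1) (by omega)]
      ring

lemma qb_self : ∀ m : ℕ, qbinom m m = 1 := by
  intro m
  induction m with
  | zero => rfl
  | succ m ih => rw [pascal1, ih, qb_of_lt m (m + 1) (by omega)]; ring

lemma qint_zero : qint 0 = 0 := by simp [qint]

lemma qint_one : qint 1 = 1 := by simp [qint]

lemma qint_succ (n : ℕ) : qint (n + 1) = qint n + X ^ n := by
  rw [qint, Finset.sum_range_succ, ← qint]

lemma qint_add (p q : ℕ) : qint (p + q) = qint p + X ^ p * qint q := by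
  induction q with
  | zero => simp [qint_zero]
  | succ q ih =>
    have e : p + (q + 1) = (p + q) + 1 := by omega
    rw [e, qint_succ, ih, qint_succ]
    ring

lemma pascal2' : ∀ s k : ℕ, qbinom (s + k + 1) (k + 1) = X ^ s * qbinom (s + k) k + qbinom (s + k) (k + 1) := by
  suffices h : ∀ n s k : ℕ, s + k = n →
      qbinom (s + k + 1) (k + 1) = X ^ s * qbinom (s + k) k + qbinom (s + k) (k + 1) by
    intro s k; exact h (s + k) s k rfl
  intro n
  induction n using Nat.strong_induction_on with
  | _ n ih =>
    intro s k hn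
    match s, k with
    | 0, k => simp [qb_self, qb_of_lt k (k + 1) (by omega)]
    | s + 1, 0 =>
      simp only [Nat.add_zero, qb_zero, mul_one]
      have ihs := ih s (by omega) s 0 rfl
      simp only [Nat.add_zero, qb_zero, mul_one] at ihs
      have p1 := pascal1 s 0
      rw [qb_zero] at p1
      rw [pascal1 (s + 1) 0, qb_zero]
      linear_combination X * ihs - p1
    | s + 1, k + 1 =>
      have e : s + 1 + (k + 1) = (s + k + 2) := by omega
      rw [e]
      have hA := ih (s + 1 + k) (by omega) (s + 1) k rfl
      have hB := ih (s + (k + 1)) (by omega) s (k + 1) rfl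
      have e2 : s + 1 + k + 1 = s + k + 2 := by omega
      have e2' : s + 1 + k = s + k + 1 := by omega
      have e3 : s + (k + 1) + 1 = s + k + 2 := by omega
      have e3' : s + (k + 1) = s + k + 1 := by omega
      rw [e2, e2'] at hA
      rw [e3, e3'] at hB
      have P0 := pascal1 (s + k + 2) (k + 1)
      have PA := pascal1 (s + k + 1) k
      have PB := pascal1 (s + k + 1) (k + 1)
      linear_combination P0 + hA + X ^ (k + 1 + 1) * hB - X ^ (s + 1) * PA - PB

lemma mixed_pascal (s k : ℕ) :
    qbinom (s + k) k + X ^ (k + 1) * qbinom (s + k) (k + 1)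
      = X ^ s * qbinom (s + k) k + qbinom (s + k) (k + 1) := by
  rw [← pascal1, pascal2']

lemma qb_symm : ∀ n m k : ℕ, m + k = n → qbinom (m + k) m = qbinom (m + k) k := by
  intro n
  induction n using Nat.strong_induction_on with
  | _ n ih =>
    intro m k hn
    match m, k with
    | 0, k => rw [qb_zero]; simp [qb_self]
    | m + 1, 0 => rw [qb_zero]; simpa using qb_self (m + 1)
    | m + 1, k + 1 =>
      have e : m + 1 + (k + 1) = (m + k + 1) + 1 := by omega
      rw [e, pascal1]
      have i1 : qbinom (m + k + 1) m = qbinom (m + k + 1) (k + 1) := by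
        have := ih (m + (k + 1)) (by omega) m (k + 1) rfl
        have e' : m + (k + 1) = m + k + 1 := by omega
        rwa [e'] at this
      have i2 : qbinom (m + k + 1) (m + 1) = qbinom (m + k + 1) k := by
        have := ih (m + 1 + k) (by omega) (m + 1) k rfl
        have e' : m + 1 + k = m + k + 1 := by omega
        rwa [e'] at this
      rw [i1, i2]
      have h := pascal2' (m + 1) k
      have e' : m + 1 + k = m + k + 1 := by omega
      rw [e'] at h
      rw [h]
      ring
-- q-factorial relation and Catalan-type identity
lemma qfact_succ (m : ℕ) : qfact (m + 1) = qfact m * qint (m + 1) := rfl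

lemma qb_fact : ∀ n m k : ℕ, m + k = n →
    qbinom (m + k) k * (qfact k * qfact m) = qfact (m + k) := by
  intro n
  induction n using Nat.strong_induction_on with
  | _ n ih =>
    intro m k hn
    match m, k with
    | m, 0 => simp [qb_zero, qfact]
    | 0, k + 1 => simp [qb_self, qfact]
    | m + 1, k + 1 =>
      have e : m + 1 + (k + 1) = (m + k + 1) + 1 := by omega
      rw [e, pascal1]
      have IH1 : qbinom (m + k + 1) k * (qfact k * qfact (m + 1)) = qfact (m + k + 1) := by
        have := ih (m + 1 + k) (by omega) (m + 1) k rfl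
        have e' : m + 1 + k = m + k + 1 := by omega
        rwa [e'] at this
      have IH2 : qbinom (m + k + 1) (k + 1) * (qfact (k + 1) * qfact m) = qfact (m + k + 1) := by
        have := ih (m + (k + 1)) (by omega) m (k + 1) rfl
        have e' : m + (k + 1) = m + k + 1 := by omega
        rwa [e'] at this
      have hq : qint (m + k + 1 + 1) = qint (k + 1) + X ^ (k + 1) * qint (m + 1) := by
        have := qint_add (k + 1) (m + 1)
        have e' : k + 1 + (m + 1) = m + k + 1 + 1 := by omega
        rwa [e'] at this
      rw [qfact_succ (m + k + 1), hq, qfact_succ m, qfact_succ k]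
      linear_combination qint (k + 1) * IH1 + X ^ (k + 1) * qint (m + 1) * IH2
        - qint (k + 1) * qbinom (m + k + 1) k * qfact k * (qfact_succ m)
        - X ^ (k + 1) * qint (m + 1) * qbinom (m + k + 1) (k + 1) * qfact m * (qfact_succ k)

lemma qint_ne_zero (m : ℕ) : qint (m + 1) ≠ 0 := by
  intro h
  have : (qint (m + 1)).coeff 0 = 1 := by
    rw [qint, Polynomial.finset_sum_coeff]
    simp [Polynomial.coeff_X_pow]
  rw [h] at this
  simp at this

lemma qfact_ne_zero : ∀ m : ℕ, qfact m ≠ 0 := by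
  intro m
  induction m with
  | zero => norm_num [qfact]
  | succ m ih => rw [qfact_succ]; exact mul_ne_zero ih (qint_ne_zero m)

noncomputable def Sb : ℕ → ℕ → Polynomial ℚ
  | _, 0 => 1
  | a, b + 1 => qbinom (a + b + 1) (b + 1) - X * qbinom (a + b + 1) b

noncomputable def SNf : ℕ → ℕ → Polynomial ℚ
  | _, 0 => 0
  | a, b + 1 => Sb a b

noncomputable def SEf : ℕ → ℕ → Polynomial ℚ
  | _, 0 => 1
  | a, b + 1 => X ^ (b + 1) * (qbinom (a + b) (b + 1) - qbinom (a + b) b)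

lemma R2 (a b : ℕ) : SEf a b + SNf a b = Sb a b := by
  match b with
  | 0 => simp [SEf, SNf, Sb]
  | 1 =>
    show X ^ 1 * (qbinom (a + 0) 1 - qbinom (a + 0) 0) + Sb a 0 =
      qbinom (a + 0 + 1) 1 - X * qbinom (a + 0 + 1) 0
    simp only [Nat.add_zero, qb_zero]
    show X ^ 1 * (qbinom a 1 - 1) + 1 = qbinom (a + 1) (0 + 1) - X * 1
    rw [pascal1 a 0, qb_zero]
    ring
  | b + 2 =>
    show X ^ (b + 2) * (qbinom (a + (b + 1)) (b + 2) - qbinom (a + (b + 1)) (b + 1)) + Sb a (b + 1)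
      = qbinom (a + (b + 1) + 1) (b + 2) - X * qbinom (a + (b + 1) + 1) (b + 1)
    show _ + (qbinom (a + b + 1) (b + 1) - X * qbinom (a + b + 1) b) = _
    have e : a + (b + 1) = a + b + 1 := by omega
    rw [e, pascal1 (a + b + 1) (b + 1), pascal1 (a + b + 1) b]
    ring

lemma R1 (a b : ℕ) : SEf (a + 1) b = SEf a b + X ^ (a + b) * SNf a b := by
  match b with
  | 0 => simp [SEf, SNf]
  | 1 =>
    show X ^ 1 * (qbinom (a + 1 + 0) 1 - qbinom (a + 1 + 0) 0)
      = X ^ 1 * (qbinom (a + 0) 1 - qbinom (a + 0) 0) + X ^ (a + 1) * SNf a 1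
    show _ = _ + X ^ (a + 1) * Sb a 0
    simp only [Nat.add_zero, qb_zero]
    have h := pascal2' a 0
    simp only [Nat.add_zero, qb_zero, mul_one] at h
    rw [h]
    show X ^ 1 * (X ^ a + qbinom a (0 + 1) - 1) = X ^ 1 * (qbinom a (0 + 1) - 1) + X ^ (a + 1) * (1 : Polynomial ℚ)
    ring
  | b + 2 =>
    show X ^ (b + 2) * (qbinom (a + 1 + (b + 1)) (b + 2) - qbinom (a + 1 + (b + 1)) (b + 1))
      = X ^ (b + 2) * (qbinom (a + (b + 1)) (b + 2) - qbinom (a + (b + 1)) (b + 1))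
        + X ^ (a + (b + 2)) * SNf a (b + 2)
    show _ = _ + X ^ (a + (b + 2)) * (qbinom (a + b + 1) (b + 1) - X * qbinom (a + b + 1) b)
    have e1 : a + 1 + (b + 1) = a + (b + 1) + 1 := by omega
    have e2 : a + (b + 1) = a + b + 1 := by omega
    have hA := pascal2' a (b + 1)   -- qb (a+(b+1)+1) (b+2) = X^a qb(a+b+1) (b+1) + qb(a+b+1) (b+2)
    have hB := pascal2' (a + 1) b   -- qb (a+1+b+1) (b+1) = X^(a+1) qb(a+1+b) b + qb(a+1+b) (b+1)
    have e3 : a + 1 + b = a + b + 1 := by omega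
    rw [e3] at hB
    rw [e1, e2] at *
    rw [hA, hB]
    ring

lemma R4 (a : ℕ) : SEf (a + 1) (a + 1) = 0 := by
  show X ^ (a + 1) * (qbinom (a + 1 + a) (a + 1) - qbinom (a + 1 + a) a) = 0
  rw [qb_symm (a + 1 + a) (a + 1) a rfl]
  ring

lemma catalan_q (d : ℕ) : qint (d + 1) * Sb d d = qbinom (2 * d) d := by
  match d with
  | 0 => simp [qint_one, Sb, qb_zero]
  | d + 1 =>
    show qint (d + 2) * (qbinom (d + 1 + d + 1) (d + 1) - X * qbinom (d + 1 + d + 1) d)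
      = qbinom (2 * (d + 1)) (d + 1)
    have e : 2 * (d + 1) = d + 1 + d + 1 := by omega
    rw [e]
    -- key : qint (d+1) * qbinom (2d+2) (d+1) = qint (d+2) * qbinom (2d+2) d
    have key : qint (d + 1) * qbinom (d + 1 + d + 1) (d + 1)
        = qint (d + 2) * qbinom (d + 1 + d + 1) d := by
      have hnz : qfact (d + 1) * qfact d ≠ 0 := mul_ne_zero (qfact_ne_zero _) (qfact_ne_zero _)
      apply mul_right_cancel₀ hnz
      have f1 : qbinom (d + 1 + (d + 1)) (d + 1) * (qfact (d + 1) * qfact (d + 1)) = qfact (d + 1 + (d + 1)) :=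
        qb_fact (d + 1 + (d + 1)) (d + 1) (d + 1) rfl
      have f2 : qbinom (d + 2 + d) d * (qfact d * qfact (d + 2)) = qfact (d + 2 + d) :=
        qb_fact (d + 2 + d) (d + 2) d rfl
      have e1 : d + 1 + (d + 1) = d + 1 + d + 1 := by omega
      have e2 : d + 2 + d = d + 1 + d + 1 := by omega
      rw [e1] at f1
      rw [e2] at f2
      -- LHS * (qfact (d+1) * qfact d)
      -- qint (d+1) * qfact d = qfact (d+1) ; qint (d+2) * qfact (d+1) = qfact (d+2)
      have g1 : qfact d * qint (d + 1) = qfact (d + 1) := rfl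
      have g2 : qfact (d + 1) * qint (d + 2) = qfact (d + 2) := rfl
      calc qint (d + 1) * qbinom (d + 1 + d + 1) (d + 1) * (qfact (d + 1) * qfact d)
          = qbinom (d + 1 + d + 1) (d + 1) * (qfact (d + 1) * (qfact d * qint (d + 1))) := by ring
        _ = qfact (d + 1 + d + 1) := by rw [g1]; exact f1
        _ = qbinom (d + 1 + d + 1) d * (qfact d * qfact (d + 2)) := f2.symm
        _ = qbinom (d + 1 + d + 1) d * (qfact d * (qfact (d + 1) * qint (d + 2))) := by rw [g2]
        _ = qint (d + 2) * qbinom (d + 1 + d + 1) d * (qfact (d + 1) * qfact d) := by ring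
    -- now: qint (d+2) * (B1 - X * B0) = B1 where we use qint (d+2) = 1 + X * qint (d+1)
    have hq : qint (d + 2) = 1 + X * qint (d + 1) := by
      have := qint_add 1 (d + 1)
      have e' : 1 + (d + 1) = d + 2 := by omega
      rw [e', qint_one] at this
      rw [this]; ring
    calc qint (d + 2) * (qbinom (d + 1 + d + 1) (d + 1) - X * qbinom (d + 1 + d + 1) d)
        = qint (d + 2) * qbinom (d + 1 + d + 1) (d + 1) - X * (qint (d + 2) * qbinom (d + 1 + d + 1) d) := by ring
      _ = qint (d + 2) * qbinom (d + 1 + d + 1) (d + 1) - X * (qint (d + 1) * qbinom (d + 1 + d + 1) (d + 1)) := by rw [key]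
      _ = (qint (d + 2) - X * qint (d + 1)) * qbinom (d + 1 + d + 1) (d + 1) := by ring
      _ = qbinom (d + 1 + d + 1) (d + 1) := by rw [hq]; ring
noncomputable def FE (rank : Step → ℕ) (p a b c : ℕ) : Polynomial ℚ :=
  (if rank D < rank E then 1 else X ^ c) * (SEf a b * qbinom p c)

noncomputable def FN (rank : Step → ℕ) (p a b c : ℕ) : Polynomial ℚ :=
  (if rank N < rank D then X ^ c else 1) * (SNf a b * qbinom p c)

noncomputable def FD (rank : Step → ℕ) (p a b : ℕ) : ℕ → Polynomial ℚ
  | 0 => 0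
  | c + 1 => ((if rank D < rank E then X ^ (a + b) else 1) * SEf a b
      + (if rank D < rank N then X ^ (a + b) else 1) * SNf a b) * qbinom p c

lemma FE_czero (rank : Step → ℕ) (p a b : ℕ) : FE rank p a b 0 = SEf a b := by
  simp [FE, qb_zero]

lemma FN_czero (rank : Step → ℕ) (p a b : ℕ) : FN rank p a b 0 = SNf a b := by
  simp [FN, qb_zero]

lemma FD_czero (rank : Step → ℕ) (p a b : ℕ) : FD rank p a b 0 = 0 := rfl

lemma order_cases (rank : Step → ℕ) (hinj : Function.Injective rank) (hEN : rank E < rank N) :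
    (rank D < rank E) ∨ (rank E < rank D ∧ rank D < rank N) ∨ (rank N < rank D) := by
  rcases lt_trichotomy (rank D) (rank E) with h | h | h
  · exact Or.inl h
  · exact absurd (hinj h) (by decide)
  · rcases lt_trichotomy (rank D) (rank N) with h2 | h2 | h2
    · exact Or.inr (Or.inl ⟨h, h2⟩)
    · exact absurd (hinj h2) (by decide)
    · exact Or.inr (Or.inr h2)

lemma idE0 (rank : Step → ℕ) (hEN : rank E < rank N) (A b p1 p2 p3 : ℕ) :
    FE rank (A + b) (A + 1) b 0
      = (if rank E < rank E then X ^ (A + b) else 1) * FE rank p1 A b 0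
      + (if rank E < rank N then X ^ (A + b) else 1) * FN rank p2 A b 0
      + (if rank E < rank D then X ^ (A + b) else 1) * FD rank p3 A b 0 := by
  rw [FE_czero, FE_czero, FN_czero, FD_czero, if_neg (lt_irrefl _), if_pos hEN]
  rw [R1 A b]
  ring

lemma idN0 (rank : Step → ℕ) (hEN : rank E < rank N) (a b0 p1 p2 p3 : ℕ) :
    FN rank (a + b0) a (b0 + 1) 0
      = (if rank N < rank E then X ^ (a + b0) else 1) * FE rank p1 a b0 0
      + (if rank N < rank N then X ^ (a + b0) else 1) * FN rank p2 a b0 0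
      + (if rank N < rank D then X ^ (a + b0) else 1) * FD rank p3 a b0 0 := by
  rw [FN_czero, FE_czero, FN_czero, FD_czero, if_neg (lt_asymm hEN), if_neg (lt_irrefl _)]
  show SNf a (b0 + 1) = _
  rw [show SNf a (b0 + 1) = Sb a b0 from rfl, ← R2 a b0]
  ring

lemma idD0 (rank : Step → ℕ) (a b p1 p2 p3 : ℕ) :
    FD rank (a + b) a b (0 + 1)
      = (if rank D < rank E then X ^ (a + b) else 1) * FE rank p1 a b 0
      + (if rank D < rank N then X ^ (a + b) else 1) * FN rank p2 a b 0
      + (if rank D < rank D then X ^ (a + b) else 1) * FD rank p3 a b 0 := by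
  rw [FE_czero, FN_czero, FD_czero, if_neg (lt_irrefl _)]
  show ((if rank D < rank E then X ^ (a + b) else 1) * SEf a b
      + (if rank D < rank N then X ^ (a + b) else 1) * SNf a b) * qbinom (a + b) 0 = _
  rw [qb_zero]
  ring

lemma idE1 (rank : Step → ℕ) (hinj : Function.Injective rank) (hEN : rank E < rank N)
    (A b C : ℕ) :
    FE rank (A + b + C + 1) (A + 1) b (C + 1)
      = (if rank E < rank E then X ^ (A + b + C + 1) else 1) * FE rank (A + b + C) A b (C + 1)
      + (if rank E < rank N then X ^ (A + b + C + 1) else 1) * FN rank (A + b + C) A b (C + 1)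
      + (if rank E < rank D then X ^ (A + b + C + 1) else 1) * FD rank (A + b + C) A b (C + 1) := by
  have hP2 := pascal2' (A + b) C
  have hMP := mixed_pascal (A + b) C
  have hR1 := R1 A b
  rw [if_neg (lt_irrefl _), if_pos hEN]
  rcases order_cases rank hinj hEN with hDE | ⟨hED, hDN⟩ | hND
  · have hDN : rank D < rank N := hDE.trans hEN
    simp only [FE, FN, FD, if_pos hDE, if_neg (lt_asymm hDN), if_neg (lt_asymm hDE), if_pos hDN]
    linear_combination qbinom (A + b + C + 1) (C + 1) * hR1
      + (SEf A b + X ^ (A + b) * SNf A b) * hP2 - X ^ (A + b) * SNf A b * hMP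
  · simp only [FE, FN, FD, if_neg (lt_asymm hED), if_neg (lt_asymm hDN), if_pos hED, if_pos hDN]
    linear_combination X ^ (C + 1) * qbinom (A + b + C + 1) (C + 1) * hR1
      + X ^ (C + 1) * (SEf A b + X ^ (A + b) * SNf A b) * hP2
  · have hED : rank E < rank D := hEN.trans hND
    simp only [FE, FN, FD, if_neg (lt_asymm hED), if_pos hND, if_pos hED, if_neg (lt_asymm hND)]
    linear_combination X ^ (C + 1) * qbinom (A + b + C + 1) (C + 1) * hR1
      + X ^ (C + 1) * (SEf A b + X ^ (A + b) * SNf A b) * hP2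
      - X ^ (A + b + C + 1) * SNf A b * hMP

lemma idN1 (rank : Step → ℕ) (hinj : Function.Injective rank) (hEN : rank E < rank N)
    (a b0 C : ℕ) :
    FN rank (a + b0 + C + 1) a (b0 + 1) (C + 1)
      = (if rank N < rank E then X ^ (a + b0 + C + 1) else 1) * FE rank (a + b0 + C) a b0 (C + 1)
      + (if rank N < rank N then X ^ (a + b0 + C + 1) else 1) * FN rank (a + b0 + C) a b0 (C + 1)
      + (if rank N < rank D then X ^ (a + b0 + C + 1) else 1) * FD rank (a + b0 + C) a b0 (C + 1) := by
  have hP2 := pascal2' (a + b0) C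
  have hMP := mixed_pascal (a + b0) C
  have hR2 := R2 a b0
  have hsn : SNf a (b0 + 1) = Sb a b0 := rfl
  rw [if_neg (lt_asymm hEN), if_neg (lt_irrefl _)]
  rcases order_cases rank hinj hEN with hDE | ⟨hED, hDN⟩ | hND
  · have hDN : rank D < rank N := hDE.trans hEN
    simp only [FE, FN, FD, hsn, if_pos hDE, if_neg (lt_asymm hDN), if_neg (lt_asymm hDE), if_pos hDN]
    linear_combination Sb a b0 * hP2
      - (qbinom (a + b0 + C) (C + 1) + X ^ (a + b0) * qbinom (a + b0 + C) C) * hR2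
  · simp only [FE, FN, FD, hsn, if_neg (lt_asymm hED), if_neg (lt_asymm hDN), if_pos hED, if_pos hDN]
    linear_combination Sb a b0 * hP2
      - (qbinom (a + b0 + C) (C + 1) + X ^ (a + b0) * qbinom (a + b0 + C) C) * hR2
      - SEf a b0 * hMP
  · have hED : rank E < rank D := hEN.trans hND
    simp only [FE, FN, FD, hsn, if_neg (lt_asymm hED), if_pos hND, if_pos hED, if_neg (lt_asymm hND)]
    linear_combination X ^ (C + 1) * Sb a b0 * hP2
      - X ^ (C + 1) * (qbinom (a + b0 + C) (C + 1) + X ^ (a + b0) * qbinom (a + b0 + C) C) * hR2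

lemma idD1 (rank : Step → ℕ) (hinj : Function.Injective rank) (hEN : rank E < rank N)
    (a b C : ℕ) :
    FD rank (a + b + C + 1) a b (C + 1 + 1)
      = (if rank D < rank E then X ^ (a + b + C + 1) else 1) * FE rank (a + b + C) a b (C + 1)
      + (if rank D < rank N then X ^ (a + b + C + 1) else 1) * FN rank (a + b + C) a b (C + 1)
      + (if rank D < rank D then X ^ (a + b + C + 1) else 1) * FD rank (a + b + C) a b (C + 1) := by
  have hP1 := pascal1 (a + b + C) C
  rw [if_neg (lt_irrefl _)]
  rcases order_cases rank hinj hEN with hDE | ⟨hED, hDN⟩ | hND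
  · have hDN : rank D < rank N := hDE.trans hEN
    simp only [FE, FN, FD, if_pos hDE, if_neg (lt_asymm hDN), if_pos hDN]
    linear_combination X ^ (a + b) * (SEf a b + SNf a b) * hP1
  · simp only [FE, FN, FD, if_neg (lt_asymm hED), if_neg (lt_asymm hDN), if_pos hDN]
    linear_combination (SEf a b + X ^ (a + b) * SNf a b) * hP1
  · have hED : rank E < rank D := hEN.trans hND
    simp only [FE, FN, FD, if_neg (lt_asymm hED), if_pos hND, if_neg (lt_asymm hND)]
    linear_combination (SEf a b + SNf a b) * hP1

lemma totId0 (rank : Step → ℕ) (a b p1 p2 p3 : ℕ) :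
    FE rank p1 a b 0 + FN rank p2 a b 0 + FD rank p3 a b 0 = Sb a b * qbinom (a + b) 0 := by
  rw [FE_czero, FN_czero, FD_czero, qb_zero, R2]
  ring

lemma totId1 (rank : Step → ℕ) (hinj : Function.Injective rank) (hEN : rank E < rank N)
    (a b C : ℕ) :
    FE rank (a + b + C) a b (C + 1) + FN rank (a + b + C) a b (C + 1)
      + FD rank (a + b + C) a b (C + 1) = Sb a b * qbinom (a + b + C + 1) (C + 1) := by
  have hP1 := pascal1 (a + b + C) C
  have hP2 := pascal2' (a + b) C
  have hR2 := R2 a b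
  rcases order_cases rank hinj hEN with hDE | ⟨hED, hDN⟩ | hND
  · have hDN : rank D < rank N := hDE.trans hEN
    simp only [FE, FN, FD, if_pos hDE, if_neg (lt_asymm hDN), if_pos hDN]
    linear_combination (qbinom (a + b + C) (C + 1) + X ^ (a + b) * qbinom (a + b + C) C) * hR2
      - Sb a b * hP2
  · simp only [FE, FN, FD, if_neg (lt_asymm hED), if_neg (lt_asymm hDN), if_pos hDN]
    linear_combination qbinom (a + b + C + 1) (C + 1) * hR2 - SEf a b * hP1 - SNf a b * hP2
  · have hED : rank E < rank D := hEN.trans hND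
    simp only [FE, FN, FD, if_neg (lt_asymm hED), if_pos hND, if_neg (lt_asymm hND)]
    linear_combination qbinom (a + b + C + 1) (C + 1) * hR2 - (SEf a b + SNf a b) * hP1
def lastD (w : List Step) : Step := w.getD (w.length - 1) E

noncomputable def WSet (a b c : ℕ) : Finset (List Step) :=
  (Words (a + b + c)).filter fun w => w.count E = a ∧ w.count N = b ∧ w.count D = c ∧ ¬ bad w

lemma mem_Words {w : List Step} {l : ℕ} : w ∈ Words l ↔ w.length = l := by
  constructor
  · intro h
    obtain ⟨f, -, rfl⟩ := Finset.mem_image.1 h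
    simp
  · intro h
    subst h
    exact Finset.mem_image.2 ⟨w.get, Finset.mem_univ _, List.ofFn_get w⟩

lemma count_total (w : List Step) : w.count E + w.count N + w.count D = w.length := by
  induction w with
  | nil => rfl
  | cons hd tl ih =>
    cases hd <;> simp [List.count_cons] <;> omega

lemma mem_WSet {w : List Step} {a b c : ℕ} :
    w ∈ WSet a b c ↔ w.count E = a ∧ w.count N = b ∧ w.count D = c ∧ bad w = false := by
  unfold WSet
  rw [Finset.mem_filter, mem_Words]
  constructor
  · rintro ⟨-, h1, h2, h3, h4⟩
    exact ⟨h1, h2, h3, by simpa using h4⟩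
  · rintro ⟨h1, h2, h3, h4⟩
    refine ⟨?_, h1, h2, h3, by simp [h4]⟩
    rw [← h1, ← h2, ← h3, count_total]

lemma WSet_length {w : List Step} {a b c : ℕ} (h : w ∈ WSet a b c) : w.length = a + b + c := by
  rw [mem_WSet] at h
  rw [← h.1, ← h.2.1, ← h.2.2.1, count_total]

lemma bad_iff {w : List Step} :
    bad w = true ↔ ∃ k, (w.take k).count E < (w.take k).count N := by
  unfold bad
  rw [List.any_eq_true]
  constructor
  · rintro ⟨k, -, hk⟩
    exact ⟨k, by simpa using hk⟩
  · rintro ⟨k, hk⟩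
    by_cases hkl : k ≤ w.length
    · exact ⟨k, List.mem_range.2 (by omega), by simpa using hk⟩
    · refine ⟨w.length, List.mem_range.2 (by omega), ?_⟩
      rw [List.take_of_length_le (by omega : w.length ≤ k)] at hk
      rw [List.take_length]
      simpa using hk
lemma good_iff {w : List Step} :
    bad w = false ↔ ∀ k, (w.take k).count N ≤ (w.take k).count E := by
  rw [← Bool.not_eq_true, bad_iff]
  push_neg
  simp [not_lt]

lemma good_take {w : List Step} (h : bad w = false) (j : ℕ) : bad (w.take j) = false := by
  rw [good_iff] at h ⊢
  intro k
  rw [List.take_take]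
  exact h _

lemma count_N_le {w : List Step} (h : bad w = false) : w.count N ≤ w.count E := by
  have := (good_iff.1 h) w.length
  rwa [List.take_length] at this

lemma WSet_empty {a b c : ℕ} (h : a < b) : WSet a b c = ∅ := by
  rw [Finset.eq_empty_iff_forall_notMem]
  intro w hw
  rw [mem_WSet] at hw
  have := count_N_le hw.2.2.2
  omega

lemma WSet_zero : WSet 0 0 0 = {[]} := by
  ext w
  rw [mem_WSet, Finset.mem_singleton]
  constructor
  · rintro ⟨h1, h2, h3, -⟩
    have h4 := count_total w
    rw [h1, h2, h3] at h4
    exact List.length_eq_zero_iff.1 h4.symm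
  · rintro rfl
    refine ⟨rfl, rfl, rfl, ?_⟩
    rfl

lemma lastD_concat (u : List Step) (x : Step) : lastD (u ++ [x]) = x := by
  unfold lastD List.getD
  have e : (u ++ [x]).length - 1 = u.length := by simp
  rw [e, List.getElem?_append_right (le_refl _)]
  simp

lemma lastD_mem (w : List Step) (h : w ≠ []) : lastD w ∈ w := by
  have hl : w.length - 1 < w.length := by
    have := List.length_pos_iff.2 h
    omega
  rw [lastD, List.getD_eq_getElem _ _ hl]
  exact List.getElem_mem hl

lemma concat_self (w : List Step) (h : w ≠ []) : w.take (w.length - 1) ++ [lastD w] = w := by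
  have hl : w.length - 1 < w.length := by
    have := List.length_pos_iff.2 h
    omega
  rw [lastD, List.getD_eq_getElem _ _ hl, ← List.concat_eq_append, List.take_concat_get]
  rw [List.take_of_length_le (by omega)]

lemma count_concat (y : Step) (u : List Step) (x : Step) :
    (u ++ [x]).count y = u.count y + if x = y then 1 else 0 := by
  rw [List.count_append]
  simp [List.count_singleton']

lemma bad_concat (u : List Step) (x : Step) :
    bad (u ++ [x]) = false ↔ bad u = false ∧ (u ++ [x]).count N ≤ (u ++ [x]).count E := by
  constructor
  · intro h
    constructor
    · have := good_take h u.length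
      rwa [List.take_append_of_le_length (le_refl _), List.take_length] at this
    · exact count_N_le h
  · rintro ⟨h1, h2⟩
    rw [good_iff]
    intro k
    by_cases hk : k ≤ u.length
    · rw [List.take_append_of_le_length hk]
      exact good_iff.1 h1 k
    · rw [List.take_of_length_le (by simp; omega)]
      exact h2
lemma getD_app {u v : List Step} {i : ℕ} (h : i < u.length) :
    (u ++ v).getD i E = u.getD i E := by
  unfold List.getD
  rw [List.getElem?_append_left h]

lemma getD_concat_len (u : List Step) (x : Step) : (u ++ [x]).getD u.length E = x := by
  unfold List.getD
  rw [List.getElem?_append_right (le_refl _)]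
  simp

lemma maj_concat (rank : Step → ℕ) (u : List Step) (x : Step) (h : u ≠ []) :
    maj rank (u ++ [x]) = maj rank u + if rank x < rank (lastD u) then u.length else 0 := by
  obtain ⟨m, hm⟩ : ∃ m, u.length = m + 1 :=
    ⟨u.length - 1, by have := List.length_pos_iff.2 h; omega⟩
  unfold maj
  have hlen : (u ++ [x]).length - 1 = m + 1 := by simp [hm]
  rw [hlen, hm]
  simp only [Nat.add_sub_cancel]
  rw [Finset.sum_range_succ]
  congr 1
  · refine Finset.sum_congr rfl ?_
    intro i hi
    rw [Finset.mem_range] at hi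
    rw [getD_app (by omega), getD_app (by omega)]
  · have h1 : (u ++ [x]).getD (m + 1) E = x := by
      rw [← hm]; exact getD_concat_len u x
    have h2 : (u ++ [x]).getD m E = lastD u := by
      rw [getD_app (by omega)]
      unfold lastD
      rw [hm]
      simp
    rw [h1, h2]

lemma sum_concat (s : Finset (List Step)) (x : Step) (g : List Step → Polynomial ℚ) :
    ∑ w ∈ s.image (· ++ [x]), g w = ∑ u ∈ s, g (u ++ [x]) := by
  refine Finset.sum_image ?_
  intro a _ b _ h
  simpa using congrArg List.dropLast h

lemma sum_fiber (s : Finset (List Step)) (g : List Step → Polynomial ℚ) :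
    ∑ w ∈ s, g w
      = ∑ w ∈ s.filter (fun w => lastD w = E), g w
      + ∑ w ∈ s.filter (fun w => lastD w = D), g w
      + ∑ w ∈ s.filter (fun w => lastD w = N), g w := by
  have h := Finset.sum_fiberwise_of_maps_to (fun w (_ : w ∈ s) => Finset.mem_univ (lastD w)) g
  rw [← h]
  have huniv : (Finset.univ : Finset Step) = {E, D, N} := rfl
  rw [huniv]
  rw [Finset.sum_insert (by decide), Finset.sum_insert (by decide), Finset.sum_singleton]
  ring

lemma fiber_empty {x : Step} {a b c : ℕ} (h0 : ∀ w ∈ WSet a b c, w.count x = 0)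
    (hl : 1 ≤ a + b + c) :
    (WSet a b c).filter (fun w => lastD w = x) = ∅ := by
  rw [Finset.filter_eq_empty_iff]
  intro w hw hx
  have hlen : w.length = a + b + c := WSet_length hw
  have hne : w ≠ [] := by intro h; rw [h] at hlen; simp at hlen; omega
  have hmem := lastD_mem w hne
  rw [hx] at hmem
  have hpos : 0 < w.count x := List.count_pos_iff.2 hmem
  rw [h0 w hw] at hpos
  omega

lemma imageE (a b c : ℕ) :
    (WSet (a + 1) b c).filter (fun w => lastD w = E) = (WSet a b c).image (· ++ [E]) := by
  ext w
  rw [Finset.mem_filter, Finset.mem_image]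
  constructor
  · rintro ⟨hw, hx⟩
    have hlen : w.length = a + 1 + b + c := WSet_length hw
    have hne : w ≠ [] := by intro h; rw [h] at hlen; simp only [List.length_nil] at hlen; omega
    have hcs := concat_self w hne
    rw [hx] at hcs
    rw [mem_WSet] at hw
    obtain ⟨hE, hN, hD, hbad⟩ := hw
    refine ⟨w.take (w.length - 1), ?_, hcs⟩
    set u := w.take (w.length - 1) with hu
    have hcE := count_concat E u E
    have hcN := count_concat N u E
    have hcD := count_concat D u E
    rw [hcs] at hcE hcN hcD
    simp at hcE hcN hcD
    rw [mem_WSet]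
    exact ⟨by omega, by omega, by omega, good_take hbad _⟩
  · rintro ⟨u, hu, rfl⟩
    rw [mem_WSet] at hu
    obtain ⟨hE, hN, hD, hbad⟩ := hu
    have h2 : bad (u ++ [E]) = false := by
      rw [bad_concat]
      refine ⟨hbad, ?_⟩
      rw [count_concat, count_concat]
      have := count_N_le hbad
      simp
      omega
    refine ⟨mem_WSet.2 ⟨?_, ?_, ?_, h2⟩, lastD_concat u E⟩ <;> simp [count_concat, hE, hN, hD]

lemma imageN (a b c : ℕ) (hba : b + 1 ≤ a) :
    (WSet a (b + 1) c).filter (fun w => lastD w = N) = (WSet a b c).image (· ++ [N]) := by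
  ext w
  rw [Finset.mem_filter, Finset.mem_image]
  constructor
  · rintro ⟨hw, hx⟩
    have hlen : w.length = a + (b + 1) + c := WSet_length hw
    have hne : w ≠ [] := by intro h; rw [h] at hlen; simp only [List.length_nil] at hlen; omega
    have hcs := concat_self w hne
    rw [hx] at hcs
    rw [mem_WSet] at hw
    obtain ⟨hE, hN, hD, hbad⟩ := hw
    refine ⟨w.take (w.length - 1), ?_, hcs⟩
    set u := w.take (w.length - 1) with hu
    have hcE := count_concat E u N
    have hcN := count_concat N u N
    have hcD := count_concat D u N
    rw [hcs] at hcE hcN hcD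
    simp at hcE hcN hcD
    rw [mem_WSet]
    exact ⟨by omega, by omega, by omega, good_take hbad _⟩
  · rintro ⟨u, hu, rfl⟩
    rw [mem_WSet] at hu
    obtain ⟨hE, hN, hD, hbad⟩ := hu
    have h2 : bad (u ++ [N]) = false := by
      rw [bad_concat]
      refine ⟨hbad, ?_⟩
      rw [count_concat, count_concat]
      simp
      omega
    refine ⟨mem_WSet.2 ⟨?_, ?_, ?_, h2⟩, lastD_concat u N⟩ <;> simp [count_concat, hE, hN, hD]

lemma imageD (a b c : ℕ) :
    (WSet a b (c + 1)).filter (fun w => lastD w = D) = (WSet a b c).image (· ++ [D]) := by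
  ext w
  rw [Finset.mem_filter, Finset.mem_image]
  constructor
  · rintro ⟨hw, hx⟩
    have hlen : w.length = a + b + (c + 1) := WSet_length hw
    have hne : w ≠ [] := by intro h; rw [h] at hlen; simp only [List.length_nil] at hlen; omega
    have hcs := concat_self w hne
    rw [hx] at hcs
    rw [mem_WSet] at hw
    obtain ⟨hE, hN, hD, hbad⟩ := hw
    refine ⟨w.take (w.length - 1), ?_, hcs⟩
    set u := w.take (w.length - 1) with hu
    have hcE := count_concat E u D
    have hcN := count_concat N u D
    have hcD := count_concat D u D
    rw [hcs] at hcE hcN hcD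
    simp at hcE hcN hcD
    rw [mem_WSet]
    exact ⟨by omega, by omega, by omega, good_take hbad _⟩
  · rintro ⟨u, hu, rfl⟩
    rw [mem_WSet] at hu
    obtain ⟨hE, hN, hD, hbad⟩ := hu
    have h2 : bad (u ++ [D]) = false := by
      rw [bad_concat]
      refine ⟨hbad, ?_⟩
      rw [count_concat, count_concat]
      have := count_N_le hbad
      simp
      omega
    refine ⟨mem_WSet.2 ⟨?_, ?_, ?_, h2⟩, lastD_concat u D⟩ <;> simp [count_concat, hE, hN, hD]

lemma key_sum (rank : Step → ℕ) (x Y : Step) (A b c L : ℕ) (hL : A + b + c = L)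
    (hpos : 1 ≤ L) :
    ∑ u ∈ (WSet A b c).filter (fun w => lastD w = Y), (X : Polynomial ℚ) ^ maj rank (u ++ [x])
      = (if rank x < rank Y then X ^ L else 1)
        * ∑ u ∈ (WSet A b c).filter (fun w => lastD w = Y), (X : Polynomial ℚ) ^ maj rank u := by
  rw [Finset.mul_sum]
  refine Finset.sum_congr rfl ?_
  intro u hu
  rw [Finset.mem_filter] at hu
  have hlen : u.length = A + b + c := WSet_length hu.1
  have hne : u ≠ [] := by intro h; rw [h] at hlen; simp only [List.length_nil] at hlen; omega
  rw [maj_concat rank u x hne, hu.2, hlen, hL]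
  by_cases hY : rank x < rank Y
  · rw [if_pos hY, if_pos hY, pow_add]; ring
  · rw [if_neg hY, if_neg hY]; ring
lemma mainG (rank : Step → ℕ) (hinj : Function.Injective rank) (hEN : rank E < rank N) :
    ∀ l a b c, a + b + c = l + 1 → b ≤ a →
      (∑ w ∈ (WSet a b c).filter (fun w => lastD w = E), (X : Polynomial ℚ) ^ maj rank w
          = FE rank l a b c)
      ∧ (∑ w ∈ (WSet a b c).filter (fun w => lastD w = N), (X : Polynomial ℚ) ^ maj rank w
          = FN rank l a b c)
      ∧ (∑ w ∈ (WSet a b c).filter (fun w => lastD w = D), (X : Polynomial ℚ) ^ maj rank w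
          = FD rank l a b c) := by
  intro l
  induction l using Nat.strong_induction_on with
  | _ l ih =>
    intro a b c hl hba
    refine ⟨?_, ?_, ?_⟩
    -- ===================== Goal E =====================
    · match a, hba with
      | 0, hba =>
        have hb : b = 0 := by omega
        subst hb
        rw [fiber_empty (fun w hw => (mem_WSet.1 hw).1) (by omega), Finset.sum_empty]
        have hc : c = l + 1 := by omega
        subst hc
        simp [FE, qb_of_lt l (l + 1) (by omega)]
      | A + 1, hba =>
        rcases eq_or_lt_of_le hba with hbe | hblt
        · -- b = A + 1 : empty
          rw [imageE A b c, WSet_empty (show A < b by omega), Finset.image_empty,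
            Finset.sum_empty, hbe]
          simp [FE, R4 A]
        · have hbA : b ≤ A := by omega
          rw [imageE A b c, sum_concat]
          rcases Nat.eq_zero_or_pos (A + b + c) with h0 | hpos
          · have hA : A = 0 := by omega
            have hb : b = 0 := by omega
            have hc : c = 0 := by omega
            have hll : l = 0 := by omega
            subst hA; subst hb; subst hc; subst hll
            rw [WSet_zero, Finset.sum_singleton]
            simp [FE, maj, SEf, qb_zero]
          · have hl' : A + b + c = l := by omega
            obtain ⟨l', rfl⟩ : ∃ l', l = l' + 1 := ⟨l - 1, by omega⟩
            rw [sum_fiber]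
            rw [key_sum rank E E A b c (l' + 1) (by omega) (by omega),
              key_sum rank E D A b c (l' + 1) (by omega) (by omega),
              key_sum rank E N A b c (l' + 1) (by omega) (by omega)]
            have IH := ih l' (by omega) A b c (by omega) hbA
            rw [IH.1, IH.2.1, IH.2.2]
            match c, hl' with
            | 0, hl' =>
              rw [show l' + 1 = A + b from by omega]
              linear_combination -(idE0 rank hEN A b l' l' l')
            | C + 1, hl' =>
              rw [show l' = A + b + C from by omega]
              linear_combination -(idE1 rank hinj hEN A b C)
    -- ===================== Goal N =====================
    · match b, hba with
      | 0, hba =>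
        rw [fiber_empty (fun w hw => (mem_WSet.1 hw).2.1) (by omega), Finset.sum_empty]
        simp [FN, SNf]
      | b0 + 1, hba =>
        rw [imageN a b0 c hba, sum_concat]
        have hpos : 1 ≤ a + b0 + c := by omega
        have hl' : a + b0 + c = l := by omega
        obtain ⟨l', rfl⟩ : ∃ l', l = l' + 1 := ⟨l - 1, by omega⟩
        rw [sum_fiber]
        rw [key_sum rank N E a b0 c (l' + 1) (by omega) (by omega),
          key_sum rank N D a b0 c (l' + 1) (by omega) (by omega),
          key_sum rank N N a b0 c (l' + 1) (by omega) (by omega)]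
        have IH := ih l' (by omega) a b0 c (by omega) (by omega)
        rw [IH.1, IH.2.1, IH.2.2]
        match c, hl' with
        | 0, hl' =>
          rw [show l' + 1 = a + b0 from by omega]
          linear_combination -(idN0 rank hEN a b0 l' l' l')
        | C + 1, hl' =>
          rw [show l' = a + b0 + C from by omega]
          linear_combination -(idN1 rank hinj hEN a b0 C)
    -- ===================== Goal D =====================
    · match c with
      | 0 =>
        rw [fiber_empty (fun w hw => (mem_WSet.1 hw).2.2.1) (by omega), Finset.sum_empty]
        rfl
      | C0 + 1 =>
        rw [imageD a b C0, sum_concat]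
        rcases Nat.eq_zero_or_pos (a + b + C0) with h0 | hpos
        · have hA : a = 0 := by omega
          have hb : b = 0 := by omega
          have hc : C0 = 0 := by omega
          have hll : l = 0 := by omega
          subst hA; subst hb; subst hc; subst hll
          rw [WSet_zero, Finset.sum_singleton]
          simp [FD, maj, SEf, SNf, qb_zero]
        · have hl' : a + b + C0 = l := by omega
          obtain ⟨l', rfl⟩ : ∃ l', l = l' + 1 := ⟨l - 1, by omega⟩
          rw [sum_fiber]
          rw [key_sum rank D E a b C0 (l' + 1) (by omega) (by omega),
            key_sum rank D D a b C0 (l' + 1) (by omega) (by omega),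
            key_sum rank D N a b C0 (l' + 1) (by omega) (by omega)]
          have IH := ih l' (by omega) a b C0 (by omega) hba
          rw [IH.1, IH.2.1, IH.2.2]
          match C0, hl' with
          | 0, hl' =>
            rw [show l' + 1 = a + b from by omega]
            linear_combination -(idD0 rank a b l' l' l')
          | C + 1, hl' =>
            rw [show l' = a + b + C from by omega]
            linear_combination -(idD1 rank hinj hEN a b C)

lemma totalSum (rank : Step → ℕ) (hinj : Function.Injective rank) (hEN : rank E < rank N)
    (a b c : ℕ) (hba : b ≤ a) :
    ∑ w ∈ WSet a b c, (X : Polynomial ℚ) ^ maj rank w = Sb a b * qbinom (a + b + c) c := by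
  rcases Nat.eq_zero_or_pos (a + b + c) with h0 | hpos
  · have hA : a = 0 := by omega
    have hb : b = 0 := by omega
    have hc : c = 0 := by omega
    subst hA; subst hb; subst hc
    rw [WSet_zero, Finset.sum_singleton]
    simp [maj, Sb, qb_zero]
  · obtain ⟨l', hll⟩ : ∃ l', a + b + c = l' + 1 := ⟨a + b + c - 1, by omega⟩
    rw [sum_fiber]
    have M := mainG rank hinj hEN l' a b c hll hba
    rw [M.1, M.2.1, M.2.2]
    match c, hll with
    | 0, hll =>
      simp only [Nat.add_zero]
      rw [qb_zero]
      linear_combination totId0 rank a b l' l' l' + Sb a b * qb_zero (a + b)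
    | C + 1, hll =>
      rw [show l' = a + b + C from by omega, show a + b + (C + 1) = a + b + C + 1 from by omega]
      linear_combination totId1 rank hinj hEN a b C

lemma SchSet_eq (d e : ℕ) : SchSet (d + e) (d + e + d) = WSet d d e := by
  ext w
  unfold SchSet DelSet
  rw [Finset.mem_filter, Finset.mem_filter, mem_Words, mem_WSet]
  constructor
  · rintro ⟨⟨hlen, h1, h2⟩, h3⟩
    have h4 := count_total w
    refine ⟨by omega, by omega, by omega, by simpa using h3⟩
  · rintro ⟨h1, h2, h3, h4⟩
    have h5 := count_total w
    exact ⟨⟨by omega, by omega, by omega⟩, by simp [h4]⟩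
/-- for any linear order with E < N, the maj generating function
over Schröder n-paths with l steps is
(1/[l-n+1]) · qbinom(2(l-n), l-n) · qbinom(l, 2n-l)
(stated with the denominator [l-n+1] cleared). -/
theorem maj_schroeder_EltN (n l : ℕ) (hnl : n ≤ l) (hl : l ≤ 2 * n)
    (rank : Step → ℕ) (hrank : Function.Injective rank) (hEN : rank E < rank N) :
    qint (l - n + 1) * ∑ w ∈ SchSet n l, (X : Polynomial ℚ) ^ maj rank w =
      qbinom (2 * (l - n)) (l - n) * qbinom l (2 * n - l) := by
  obtain ⟨d, rfl⟩ : ∃ d, l = n + d := ⟨l - n, by omega⟩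
  obtain ⟨e, rfl⟩ : ∃ e, n = d + e := ⟨n - d, by omega⟩
  rw [show d + e + d - (d + e) = d from by omega,
    show 2 * (d + e) - (d + e + d) = e from by omega]
  rw [SchSet_eq d e, totalSum rank hrank hEN d d e (le_refl d)]
  rw [show d + e + d = d + d + e from by omega, ← mul_assoc, catalan_q d]
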